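/- Let v_1,…,v_q ∈ ℝⁿ with Σ_{i=1}^q v_i = 0 such that P := conv{v_1,…,v_q} has nonempty interior, and let V ∈ ℝ^{n×q} be the matrix with columns v_i. Then the map Φ(y) := V softmax(Vᵀy) is surjective onto the interior of P: for every x ∈ int(P) there exists y ∈ ℝⁿ with V softmax(Vᵀy) = x. -/

import Mathlib

open Real

/-- The softmax map `softmax(y)_i = exp(y_i) / Σ_j exp(y_j)`. -/
noncomputable def softmax {m : ℕ} (y : Fin m → ℝ) : Fin m → ℝ :=
  fun i => Real.exp (y i) / ∑ j, Real.exp (y j)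

/-- Let `v_1, …, v_q ∈ ℝⁿ` with `Σ_i v_i = 0` and such that
`P = conv {v_1, …, v_q}` has nonempty interior.  Then `Φ(y) = V softmax (Vᵀ y)`
is surjective onto `int P`: for every `x ∈ int P` there is `y ∈ ℝⁿ` with
`Σ_i softmax(Vᵀy)_i v_i = x`. -/
theorem softmax_param_surjective {n q : ℕ} (v : Fin q → Fin n → ℝ)
    (hsum : ∑ i, v i = 0)
    (hint : (interior (convexHull ℝ (Set.range v))).Nonempty)
    (x : Fin n → ℝ) (hx : x ∈ interior (convexHull ℝ (Set.range v))) :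
    ∃ y : Fin n → ℝ,
      (∑ i, softmax (fun i : Fin q => ∑ j, v i j * y j) i • v i) = x := by
  classical
  rcases Nat.eq_zero_or_pos q with hq0 | hq0
  · exfalso
    subst hq0
    simp [Set.range_eq_empty] at hx
  have : Nonempty (Fin q) := ⟨⟨0, hq0⟩⟩
  have hqne : (Finset.univ : Finset (Fin q)).Nonempty := Finset.univ_nonempty
  set L : (Fin n → ℝ) → Fin q → ℝ := fun y i => ∑ j, v i j * y j with hL
  set S : (Fin n → ℝ) → ℝ := fun y => ∑ i, Real.exp (L y i) with hSdef
  have hS : ∀ y, 0 < S y := fun y => Finset.sum_pos (fun i _ => Real.exp_pos _) hqne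
  set f : (Fin n → ℝ) → ℝ := fun y => Real.log (S y) - ∑ j, x j * y j with hfdef
  obtain ⟨ε, hε, hball⟩ := Metric.mem_nhds_iff.mp (mem_interior_iff_mem_nhds.mp hx)
  -- coercivity
  have key : ∀ y : Fin n → ℝ, (ε / 2) * ‖y‖ ≤ f y := by
    intro y
    have h1 : ∃ i : Fin q, (ε / 2) * ‖y‖ ≤ L y i - ∑ j, x j * y j := by
      by_cases hy : y = 0
      · refine ⟨⟨0, hq0⟩, ?_⟩
        simp [hy, hL]
      · have hyn : 0 < ‖y‖ := norm_pos_iff.mpr hy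
        set c : ℝ := ε / (2 * ‖y‖) with hc
        have hcpos : 0 < c := div_pos hε (by positivity)
        have hcmul : c * ‖y‖ = ε / 2 := by
          field_simp [hc]
          rw [hc]; field_simp [hyn.ne']
        set z : Fin n → ℝ := x + c • y with hz
        have hzball : z ∈ Metric.ball x ε := by
          have : dist z x = c * ‖y‖ := by
            rw [dist_eq_norm, hz, add_sub_cancel_left, norm_smul, Real.norm_eq_abs,
              abs_of_pos hcpos]
          rw [Metric.mem_ball, this, hcmul]
          linarith
        have hzconv : z ∈ convexHull ℝ (Set.range v) := hball hzball
        have hlin : IsLinearMap ℝ (fun w : Fin n → ℝ => ∑ j, w j * y j) := by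
          constructor
          · intro a b
            simp [add_mul, Finset.sum_add_distrib]
          · intro c a
            simp [Finset.mul_sum, mul_assoc]
        set M : ℝ := Finset.univ.sup' hqne (fun i => L y i) with hM
        have hhalf : convexHull ℝ (Set.range v) ⊆ {w : Fin n → ℝ | ∑ j, w j * y j ≤ M} := by
          apply convexHull_min
          · rintro _ ⟨i, rfl⟩
            exact Finset.le_sup' (fun i => L y i) (Finset.mem_univ i)
          · exact convex_halfSpace_le hlin M
        have hzle : ∑ j, z j * y j ≤ M := hhalf hzconv
        obtain ⟨i, -, hi⟩ := Finset.exists_mem_eq_sup' hqne (fun i => L y i)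
        refine ⟨i, ?_⟩
        have hzsum : ∑ j, z j * y j = (∑ j, x j * y j) + c * ∑ j, y j * y j := by
          simp [hz, add_mul, Finset.sum_add_distrib, Finset.mul_sum, mul_assoc]
        have hnormsq : ‖y‖ ^ 2 ≤ ∑ j, y j * y j := by
          have hsum0 : (0:ℝ) ≤ ∑ j, y j * y j :=
            Finset.sum_nonneg fun j _ => mul_self_nonneg _
          have h2 : ‖y‖ ≤ Real.sqrt (∑ j, y j * y j) := by
            rw [pi_norm_le_iff_of_nonneg (Real.sqrt_nonneg _)]
            intro j
            rw [Real.norm_eq_abs, ← Real.sqrt_mul_self_eq_abs]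
            exact Real.sqrt_le_sqrt
              (Finset.single_le_sum (fun j _ => mul_self_nonneg (y j)) (Finset.mem_univ j))
          calc ‖y‖ ^ 2 ≤ Real.sqrt (∑ j, y j * y j) ^ 2 :=
                pow_le_pow_left₀ (norm_nonneg _) h2 2
            _ = ∑ j, y j * y j := Real.sq_sqrt hsum0
        have hc2 : c * ‖y‖ ^ 2 ≤ c * ∑ j, y j * y j :=
          mul_le_mul_of_nonneg_left hnormsq hcpos.le
        have heq : (ε / 2) * ‖y‖ = c * ‖y‖ ^ 2 := by
          rw [← hcmul]; ring
        rw [hM, hi] at hzle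
        linarith [hzle, hzsum, hc2, heq]
    obtain ⟨i, hi⟩ := h1
    have hexple : Real.exp (L y i) ≤ S y :=
      Finset.single_le_sum (fun i _ => (Real.exp_pos (L y i)).le) (Finset.mem_univ i)
    have hlog : L y i ≤ Real.log (S y) := (Real.le_log_iff_exp_le (hS y)).mpr hexple
    simp only [hfdef]
    linarith
  -- continuity
  have hScont : Continuous S := by
    apply continuous_finset_sum
    intro i _
    exact Real.continuous_exp.comp
      (continuous_finset_sum _ fun j _ => continuous_const.mul (continuous_apply j))
  have hfc : Continuous f := by
    rw [continuous_iff_continuousAt]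
    intro y
    exact ((Real.continuousAt_log (hS y).ne').comp hScont.continuousAt).sub
      ((continuous_finset_sum _ fun j _ => continuous_const.mul (continuous_apply j)).continuousAt)
  -- minimizer on a big ball
  set R : ℝ := (2 / ε) * f 0 + 1 with hR
  have hf0 : 0 ≤ f 0 := by have := key 0; simpa using this
  have hRpos : 0 < R := by positivity
  obtain ⟨y₀, hy₀K, hy₀min⟩ :=
    (isCompact_closedBall (0 : Fin n → ℝ) R).exists_isMinOn
      ⟨0, Metric.mem_closedBall_self hRpos.le⟩ hfc.continuousOn
  have hglobal : ∀ y, f y₀ ≤ f y := by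
    intro y
    by_cases hyK : y ∈ Metric.closedBall (0 : Fin n → ℝ) R
    · exact hy₀min hyK
    · have h1 : R < ‖y‖ := by
        simpa [Metric.mem_closedBall, dist_zero_right, not_le] using hyK
      have h0 : f y₀ ≤ f 0 := hy₀min (Metric.mem_closedBall_self hRpos.le)
      have h2 : (ε / 2) * R ≤ (ε / 2) * ‖y‖ :=
        mul_le_mul_of_nonneg_left h1.le (by positivity)
      have hcalc : (ε / 2) * R = f 0 + ε / 2 := by
        rw [hR]; field_simp
      clear_value L S f R
      linarith [key y, hε, h0, h2, hcalc]
  have hloc : IsLocalMin f y₀ := Filter.Eventually.of_forall hglobal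
  -- derivative
  set pr : Fin n → ((Fin n → ℝ) →L[ℝ] ℝ) := fun j => ContinuousLinearMap.proj j with hpr
  set Φ : Fin q → ((Fin n → ℝ) →L[ℝ] ℝ) := fun i => ∑ j, v i j • pr j with hΦ
  set Ψ : (Fin n → ℝ) →L[ℝ] ℝ := ∑ j, x j • pr j with hΨ
  have hΦapp : ∀ i w, Φ i w = ∑ j, v i j * w j := by
    intro i w
    simp [hΦ, hpr, ContinuousLinearMap.sum_apply]
  have hΨapp : ∀ w, Ψ w = ∑ j, x j * w j := by
    intro w
    simp [hΨ, hpr, ContinuousLinearMap.sum_apply]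
  have hΦderiv : ∀ i (y : Fin n → ℝ), HasFDerivAt (fun y => L y i) (Φ i) y := by
    intro i y
    have h : (fun y : Fin n → ℝ => L y i) = fun y => Φ i y := by
      funext w; rw [hΦapp]
    rw [h]
    exact (Φ i).hasFDerivAt
  have hΨderiv : ∀ y : Fin n → ℝ, HasFDerivAt (fun y : Fin n → ℝ => ∑ j, x j * y j) Ψ y := by
    intro y
    have h : (fun y : Fin n → ℝ => ∑ j, x j * y j) = fun y => Ψ y := by
      funext w; rw [hΨapp]
    rw [h]
    exact Ψ.hasFDerivAt
  have hSderiv : HasFDerivAt S (∑ i, Real.exp (L y₀ i) • Φ i) y₀ :=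
    HasFDerivAt.fun_sum fun i _ => (hΦderiv i y₀).exp
  have hfderiv : HasFDerivAt f
      ((S y₀)⁻¹ • (∑ i, Real.exp (L y₀ i) • Φ i) - Ψ) y₀ :=
    (hSderiv.log (hS y₀).ne').sub (hΨderiv y₀)
  have hD0 : ((S y₀)⁻¹ • (∑ i, Real.exp (L y₀ i) • Φ i) - Ψ) = 0 :=
    hloc.hasFDerivAt_eq_zero hfderiv
  have hk : ∀ k, (S y₀)⁻¹ * (∑ i, Real.exp (L y₀ i) * v i k) = x k := by
    intro k
    have h := congrArg (fun T : (Fin n → ℝ) →L[ℝ] ℝ => T (Pi.single k 1)) hD0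
    simp only [ContinuousLinearMap.sub_apply, ContinuousLinearMap.smul_apply,
      ContinuousLinearMap.sum_apply, ContinuousLinearMap.zero_apply, smul_eq_mul] at h
    have hΦs : ∀ i, Φ i (Pi.single k 1) = v i k := by
      intro i
      rw [hΦapp]
      simp [Pi.single_apply]
    have hΨs : Ψ (Pi.single k 1) = x k := by
      rw [hΨapp]
      simp [Pi.single_apply]
    rw [hΨs] at h
    simp only [hΦs] at h
    linarith [h]
  refine ⟨y₀, ?_⟩
  funext k
  have hlhs : (∑ i, softmax (fun i : Fin q => ∑ j, v i j * y₀ j) i • v i) k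
      = (S y₀)⁻¹ * ∑ i, Real.exp (L y₀ i) * v i k := by
    simp only [Finset.sum_apply, Pi.smul_apply, smul_eq_mul, softmax, hSdef, hL]
    rw [Finset.mul_sum]
    exact Finset.sum_congr rfl fun i _ => by ring
  rw [hlhs, hk]
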